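/- Define a₀ = 1 and a_{n+1} = -aₙ / (2(n+1)(2n+1)) for n ≥ 0, so aₙ = (-1)ⁿ/(2n)!. Then the binomial series y(z) = Σ_{n=0}^∞ ((-1)ⁿ/(2n)!) z^{\underline{n}} converges locally uniformly on ℂ to an entire function satisfying the difference equation (4z+6)Δ²y(z) + 3Δy(z) + y(z) = 0. -/

import Mathlib

open Filter

/-- Falling factorial. -/
noncomputable def ff (z : ℂ) : ℕ → ℂ
  | 0 => 1
  | n + 1 => ff z n * (z - n)

/-- Forward difference operator. -/
noncomputable def fdiff (f : ℂ → ℂ) : ℂ → ℂ := fun z => f (z + 1) - f z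

namespace S16


noncomputable def a : ℕ → ℂ := fun n => (-1 : ℂ) ^ n / ((2 * n).factorial : ℂ)
noncomputable def b : ℕ → ℂ := fun n => ((n : ℂ) + 1) * a (n + 1)
noncomputable def c : ℕ → ℂ := fun n => ((n : ℂ) + 1) * b (n + 1)
noncomputable def e : ℕ → ℂ
  | 0 => 0
  | n + 1 => 4 * c n
noncomputable def g4 : ℕ → ℂ := fun n => (4 * (n : ℂ) + 6) * c n

lemma norm_a (n : ℕ) : ‖a n‖ = 1 / ((2 * n).factorial : ℝ) := by
  simp [a, norm_div]

lemma norm_b (n : ℕ) : ‖b n‖ = ((n : ℝ) + 1) / ((2 * n + 2).factorial : ℝ) := by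
  have h1 : ((n : ℂ) + 1) = ((n + 1 : ℕ) : ℂ) := by push_cast; ring
  have h2 : 2 * (n + 1) = 2 * n + 2 := by ring
  rw [show b n = ((n : ℂ) + 1) * a (n + 1) from rfl, h1, norm_mul, norm_a,
      Complex.norm_natCast, h2]
  push_cast; ring

lemma norm_c (n : ℕ) : ‖c n‖ = ((n : ℝ) + 1) * ((n : ℝ) + 2) / ((2 * n + 4).factorial : ℝ) := by
  have h1 : ((n : ℂ) + 1) = ((n + 1 : ℕ) : ℂ) := by push_cast; ring
  have h2 : 2 * (n + 1) + 2 = 2 * n + 4 := by ring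
  rw [show c n = ((n : ℂ) + 1) * b (n + 1) from rfl, h1, norm_mul, norm_b,
      Complex.norm_natCast, h2]
  push_cast; ring

lemma fact_mono {m n : ℕ} (h : m ≤ n) : ((m.factorial : ℝ)) ≤ n.factorial := by
  exact_mod_cast Nat.factorial_le h

lemma frac_le {p q r s : ℝ} (hq : 0 < q) (hs : 0 < s) (h : p * s ≤ r * q) :
    p / q ≤ r / s := by
  rw [div_le_div_iff₀ hq hs]; exact h

lemma bd_a : ∀ n, ‖a n‖ ≤ 1 * ((n : ℝ) + 1) ^ 3 / ((2 * n).factorial : ℝ) := by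
  intro n
  rw [norm_a]
  have hn : (0:ℝ) ≤ n := Nat.cast_nonneg n
  apply frac_le (by positivity) (by positivity)
  nlinarith [Nat.cast_pos (α := ℝ).mpr (2 * n).factorial_pos, mul_nonneg hn hn,
    mul_nonneg (mul_nonneg hn hn) hn]

lemma bd_b : ∀ n, ‖b n‖ ≤ 1 * ((n : ℝ) + 1) ^ 3 / ((2 * n).factorial : ℝ) := by
  intro n
  rw [norm_b]
  have hn : (0:ℝ) ≤ n := Nat.cast_nonneg n
  apply frac_le (by positivity) (by positivity)
  have hfac : (((2 * n).factorial : ℝ)) ≤ ((2 * n + 2).factorial : ℝ) := fact_mono (by omega)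
  have h1 : ((n:ℝ) + 1) ≤ 1 * ((n:ℝ) + 1) ^ 3 := by nlinarith [mul_nonneg hn hn]
  exact mul_le_mul h1 hfac (by positivity) (by positivity)

lemma bd_c : ∀ n, ‖c n‖ ≤ 2 * ((n : ℝ) + 1) ^ 3 / ((2 * n).factorial : ℝ) := by
  intro n
  rw [norm_c]
  have hn : (0:ℝ) ≤ n := Nat.cast_nonneg n
  apply frac_le (by positivity) (by positivity)
  have hfac : (((2 * n).factorial : ℝ)) ≤ ((2 * n + 4).factorial : ℝ) := fact_mono (by omega)
  have h1 : ((n:ℝ) + 1) * ((n:ℝ) + 2) ≤ 2 * ((n:ℝ) + 1) ^ 3 := by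
    nlinarith [mul_nonneg hn hn, mul_nonneg (mul_nonneg hn hn) hn]
  exact mul_le_mul h1 hfac (by positivity) (by positivity)

lemma bd_e : ∀ n, ‖e n‖ ≤ 4 * ((n : ℝ) + 1) ^ 3 / ((2 * n).factorial : ℝ) := by
  intro n
  match n with
  | 0 =>
    rw [show e 0 = 0 from rfl, norm_zero]
    positivity
  | n + 1 =>
    have h0 : ‖e (n + 1)‖ = 4 * ‖c n‖ := by
      rw [show e (n + 1) = 4 * c n from rfl, norm_mul]; norm_num
    rw [h0, norm_c, ← mul_div_assoc]
    have hn : (0:ℝ) ≤ n := Nat.cast_nonneg n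
    apply frac_le (by positivity) (by positivity)
    have hfac : (((2 * (n + 1)).factorial : ℝ)) ≤ ((2 * n + 4).factorial : ℝ) :=
      fact_mono (by omega)
    have h1 : 4 * (((n:ℝ) + 1) * ((n:ℝ) + 2)) ≤ 4 * (((n + 1 : ℕ):ℝ) + 1) ^ 3 := by
      push_cast
      nlinarith [mul_nonneg hn hn, mul_nonneg (mul_nonneg hn hn) hn]
    exact mul_le_mul h1 hfac (by positivity) (by positivity)

lemma bd_g4 : ∀ n, ‖g4 n‖ ≤ 12 * ((n : ℝ) + 1) ^ 3 / ((2 * n).factorial : ℝ) := by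
  intro n
  have h1 : (4 * (n : ℂ) + 6) = ((4 * n + 6 : ℕ) : ℂ) := by push_cast; ring
  have h2 : ‖g4 n‖ = (4 * (n:ℝ) + 6) * ‖c n‖ := by
    rw [show g4 n = (4 * (n : ℂ) + 6) * c n from rfl, h1, norm_mul, Complex.norm_natCast]
    push_cast; ring
  rw [h2, norm_c, ← mul_div_assoc]
  have hn : (0:ℝ) ≤ n := Nat.cast_nonneg n
  apply frac_le (by positivity) (by positivity)
  have hfac : (((2 * n).factorial : ℝ)) ≤ ((2 * n + 4).factorial : ℝ) := fact_mono (by omega)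
  have hnum : (4 * (n:ℝ) + 6) * (((n:ℝ) + 1) * ((n:ℝ) + 2)) ≤ 12 * ((n:ℝ) + 1) ^ 3 := by
    nlinarith [mul_nonneg hn hn, mul_nonneg (mul_nonneg hn hn) hn]
  exact mul_le_mul hnum hfac (by positivity) (by positivity)

lemma fact_sq_le (n : ℕ) : n.factorial * n.factorial ≤ (2 * n).factorial := by
  have h := Nat.choose_mul_factorial_mul_factorial (show n ≤ 2 * n by omega)
  have hpos : 0 < (2 * n).choose n := Nat.choose_pos (by omega)
  have h2 : 2 * n - n = n := by omega
  rw [h2] at h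
  calc n.factorial * n.factorial = 1 * n.factorial * n.factorial := by ring
    _ ≤ (2 * n).choose n * n.factorial * n.factorial := by
        exact Nat.mul_le_mul_right _ (Nat.mul_le_mul_right _ hpos)
    _ = (2 * n).factorial := h

lemma cube_le (n : ℕ) : (n + 1) ^ 3 ≤ 8 * 2 ^ n := by
  induction n with
  | zero => norm_num
  | succ m ih =>
    rcases Nat.lt_or_ge m 3 with h | h
    · interval_cases m <;> norm_num
    · have h9 : 3 * 3 ≤ m * m := Nat.mul_le_mul h h
      have h10 : 9 * m ≤ m * m * m := Nat.mul_le_mul h9 (le_refl m)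
      have h1 : (m + 2) ^ 3 ≤ 2 * (m + 1) ^ 3 := by nlinarith [h10, h]
      calc (m + 1 + 1) ^ 3 = (m + 2) ^ 3 := by ring
        _ ≤ 2 * (m + 1) ^ 3 := h1
        _ ≤ 2 * (8 * 2 ^ m) := by exact Nat.mul_le_mul_left _ ih
        _ = 8 * 2 ^ (m + 1) := by ring

lemma ff_bound {r : ℝ} (hr : 0 ≤ r) {z : ℂ} (hz : ‖z‖ ≤ r) (n : ℕ) :
    ‖ff z n‖ ≤ (r + 1) ^ n * n.factorial := by
  induction n with
  | zero => simp [ff]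
  | succ m ih =>
    have hm : ‖z - (m : ℂ)‖ ≤ r + m := by
      calc ‖z - (m : ℂ)‖ ≤ ‖z‖ + ‖(m : ℂ)‖ := norm_sub_le _ _
        _ ≤ r + m := by rw [Complex.norm_natCast]; linarith
    have h2 : (r + m : ℝ) ≤ (r + 1) * (m + 1) := by nlinarith
    have heq : ‖ff z (m + 1)‖ = ‖ff z m‖ * ‖z - (m : ℂ)‖ := by
      show ‖ff z m * (z - m)‖ = _ ; exact norm_mul _ _
    rw [heq]
    calc ‖ff z m‖ * ‖z - (m : ℂ)‖ ≤ ((r + 1) ^ m * m.factorial) * ((r + 1) * (m + 1)) :=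
          mul_le_mul ih (hm.trans h2) (norm_nonneg _) (by positivity)
      _ = (r + 1) ^ (m + 1) * (m + 1).factorial := by
          rw [Nat.factorial_succ]; push_cast; ring

lemma term_bound {g : ℕ → ℂ} {C : ℝ} (hC : 0 ≤ C)
    (hg : ∀ n, ‖g n‖ ≤ C * ((n : ℝ) + 1) ^ 3 / ((2 * n).factorial : ℝ))
    {r : ℝ} (hr : 0 ≤ r) {z : ℂ} (hz : ‖z‖ ≤ r) (n : ℕ) :
    ‖g n * ff z n‖ ≤ 8 * C * (2 * (r + 1)) ^ n / n.factorial := by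
  have h1 : ‖g n * ff z n‖ ≤ (C * ((n : ℝ) + 1) ^ 3 / ((2 * n).factorial : ℝ)) * ((r + 1) ^ n * n.factorial) := by
    rw [norm_mul]
    exact mul_le_mul (hg n) (ff_bound hr hz n) (norm_nonneg _) (by positivity)
  refine h1.trans ?_
  have hcube : ((n : ℝ) + 1) ^ 3 ≤ 8 * 2 ^ n := by exact_mod_cast cube_le n
  have hfac : ((n.factorial : ℝ)) * n.factorial ≤ ((2 * n).factorial : ℝ) := by
    exact_mod_cast fact_sq_le n
  rw [div_mul_eq_mul_div, div_le_div_iff₀ (by positivity) (by positivity)]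
  calc C * ((n : ℝ) + 1) ^ 3 * ((r + 1) ^ n * n.factorial) * n.factorial
      = (C * (r + 1) ^ n) * (((n : ℝ) + 1) ^ 3 * ((n.factorial : ℝ) * n.factorial)) := by ring
    _ ≤ (C * (r + 1) ^ n) * ((8 * 2 ^ n) * ((2 * n).factorial : ℝ)) := by
        refine mul_le_mul_of_nonneg_left ?_ (by positivity)
        exact mul_le_mul hcube hfac (by positivity) (by positivity)
    _ = 8 * C * (2 * (r + 1)) ^ n * ((2 * n).factorial : ℝ) := by
        rw [mul_pow]; ring

lemma summable_aux {g : ℕ → ℂ} {C : ℝ} (hC : 0 ≤ C)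
    (hg : ∀ n, ‖g n‖ ≤ C * ((n : ℝ) + 1) ^ 3 / ((2 * n).factorial : ℝ)) (z : ℂ) :
    Summable (fun n => g n * ff z n) := by
  apply Summable.of_norm
  apply Summable.of_nonneg_of_le (fun n => norm_nonneg _)
    (term_bound hC hg (norm_nonneg z) le_rfl)
  have := (Real.summable_pow_div_factorial (2 * (‖z‖ + 1))).mul_left (8 * C)
  simpa [mul_div_assoc] using this


lemma ff_shift (z : ℂ) (n : ℕ) : ff (z + 1) (n + 1) = (z + 1) * ff z n := by
  induction n with
  | zero => simp [ff]
  | succ m ih =>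
    rw [show ff (z + 1) (m + 1 + 1) = ff (z + 1) (m + 1) * (z + 1 - (m + 1 : ℕ)) from rfl, ih,
        show ff z (m + 1) = ff z m * (z - m) from rfl]
    push_cast
    ring

lemma fdiff_series {g : ℕ → ℂ} {C : ℝ} (hC : 0 ≤ C)
    (hg : ∀ n, ‖g n‖ ≤ C * ((n : ℝ) + 1) ^ 3 / ((2 * n).factorial : ℝ)) (z : ℂ) :
    fdiff (fun w => ∑' n, g n * ff w n) z = ∑' n : ℕ, ((n : ℂ) + 1) * g (n + 1) * ff z n := by
  have hs1 := summable_aux hC hg (z + 1)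
  have hs2 := summable_aux hC hg z
  show (∑' n, g n * ff (z + 1) n) - ∑' n, g n * ff z n = _
  rw [← Summable.tsum_sub hs1 hs2, Summable.tsum_eq_zero_add (hs1.sub hs2)]
  have h0 : g 0 * ff (z + 1) 0 - g 0 * ff z 0 = 0 := by simp [ff]
  rw [h0, zero_add]
  apply tsum_congr
  intro n
  rw [ff_shift, show ff z (n + 1) = ff z n * (z - n) from rfl]
  ring

lemma a_rec (n : ℕ) : (2 * (n : ℂ) + 2) * (2 * (n : ℂ) + 1) * a (n + 1) = - a n := by
  simp only [a]
  have h : 2 * (n + 1) = (2 * n + 1) + 1 := by omega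
  rw [h, Nat.factorial_succ, Nat.factorial_succ]
  have hne : ((2 * n).factorial : ℂ) ≠ 0 := by
    exact_mod_cast Nat.cast_ne_zero.mpr (Nat.factorial_ne_zero (2 * n))
  have h1 : (2 * (n : ℂ) + 1 + 1) ≠ 0 := by
    have h1' : ((2 * n + 2 : ℕ) : ℂ) ≠ 0 := Nat.cast_ne_zero.mpr (by omega)
    push_cast at h1'
    intro hcon
    apply h1'
    linear_combination hcon
  have h2 : (2 * (n : ℂ) + 1) ≠ 0 := by
    have h2' : ((2 * n + 1 : ℕ) : ℂ) ≠ 0 := Nat.cast_ne_zero.mpr (by omega)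
    push_cast at h2'
    exact h2'
  push_cast
  field_simp
  ring

lemma coef_zero : ∀ n, e n + g4 n + 3 * b n + a n = 0 := by
  intro n
  match n with
  | 0 =>
    simp only [e, g4, c, b, a]
    norm_num [Nat.factorial]
  | n + 1 =>
    have R1 := a_rec (n + 1)
    have R2 := a_rec (n + 2)
    simp only [e, g4, c, b]
    push_cast at R1 R2 ⊢
    linear_combination R1 + ((n : ℂ) + 2) * R2

noncomputable def y : ℂ → ℂ := fun z => ∑' n, a n * ff z n

lemma fdy : fdiff y = fun z => ∑' n, b n * ff z n := by
  funext z
  have h := fdiff_series (by norm_num) bd_a z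
  simpa [show y = fun w => ∑' n, a n * ff w n from rfl, b] using h

lemma fd2y (z : ℂ) : fdiff (fdiff y) z = ∑' n, c n * ff z n := by
  rw [fdy]
  have h := fdiff_series (by norm_num) bd_b z
  simpa [c] using h

lemma main_eq (z : ℂ) :
    (4 * z + 6) * fdiff (fdiff y) z + 3 * fdiff y z + y z = 0 := by
  have hsa := summable_aux (by norm_num : (0:ℝ) ≤ 1) bd_a z
  have hsb := summable_aux (by norm_num : (0:ℝ) ≤ 1) bd_b z
  have hse := summable_aux (by norm_num : (0:ℝ) ≤ 4) bd_e z
  have hsg4 := summable_aux (by norm_num : (0:ℝ) ≤ 12) bd_g4 z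
  have hses : Summable (fun n => e (n + 1) * ff z (n + 1)) :=
    hse.comp_injective (add_left_injective 1)
  have hsb3 : Summable (fun n => 3 * (b n * ff z n)) := hsb.mul_left 3
  have h1 : (4 * z + 6) * fdiff (fdiff y) z
      = (∑' n, e (n + 1) * ff z (n + 1)) + ∑' n, g4 n * ff z n := by
    rw [fd2y, ← tsum_mul_left, ← Summable.tsum_add hses hsg4]
    apply tsum_congr
    intro n
    rw [show e (n + 1) = 4 * c n from rfl, show ff z (n + 1) = ff z n * (z - n) from rfl,
        show g4 n = (4 * (n : ℂ) + 6) * c n from rfl]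
    ring
  have h3 : ∑' n, e (n + 1) * ff z (n + 1) = ∑' n, e n * ff z n := by
    rw [Summable.tsum_eq_zero_add hse, show e 0 = (0 : ℂ) from rfl, zero_mul, zero_add]
  have h4 : 3 * fdiff y z = ∑' n, 3 * (b n * ff z n) := by
    rw [fdy, ← tsum_mul_left]
  have h5 : y z = ∑' n, a n * ff z n := rfl
  rw [h1, h3, h4, h5, ← Summable.tsum_add hse hsg4, ← Summable.tsum_add (hse.add hsg4) hsb3,
      ← Summable.tsum_add ((hse.add hsg4).add hsb3) hsa]
  have hz : ∀ n : ℕ, e n * ff z n + g4 n * ff z n + 3 * (b n * ff z n) + a n * ff z n = 0 := by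
    intro n
    have hc := coef_zero n
    calc e n * ff z n + g4 n * ff z n + 3 * (b n * ff z n) + a n * ff z n
        = (e n + g4 n + 3 * b n + a n) * ff z n := by ring
      _ = 0 := by rw [hc, zero_mul]
  rw [tsum_congr hz, tsum_zero]

end S16


/-- The binomial series `Σ ((-1)ⁿ/(2n)!) z^{\underline{n}}` converges locally uniformly
on `ℂ` to an entire function satisfying `(4z+6)Δ²y + 3Δy + y = 0`. -/
theorem stmt_16 :
    ∃ y : ℂ → ℂ,
      (∀ K : Set ℂ, IsCompact K →
        TendstoUniformlyOn
          (fun N z => ∑ n ∈ Finset.range N, (-1 : ℂ) ^ n / ((2 * n).factorial : ℂ) * ff z n)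
          y atTop K) ∧
      (∀ z : ℂ, (4 * z + 6) * fdiff (fdiff y) z + 3 * fdiff y z + y z = 0) := by
  refine ⟨S16.y, ?_, S16.main_eq⟩
  intro K hK
  obtain ⟨r, hr⟩ := hK.isBounded.subset_closedBall 0
  set R : ℝ := max r 0 with hR
  have hKR : K ⊆ Metric.closedBall 0 R :=
    hr.trans (Metric.closedBall_subset_closedBall (le_max_left _ _))
  have hconv : TendstoUniformlyOn
      (fun N z => ∑ n ∈ Finset.range N, S16.a n * ff z n)
      (fun z => ∑' n, S16.a n * ff z n) atTop (Metric.closedBall 0 R) := by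
    apply tendstoUniformlyOn_tsum_nat
      (u := fun n => 8 * 1 * (2 * (R + 1)) ^ n / n.factorial)
    · have := (Real.summable_pow_div_factorial (2 * (R + 1))).mul_left (8 * 1)
      simpa [mul_div_assoc] using this
    · intro n x hx
      have hx' : ‖x‖ ≤ R := mem_closedBall_zero_iff.mp hx
      exact S16.term_bound (by norm_num) S16.bd_a (le_max_right r 0) hx' n
  exact (hconv.mono hKR : _)
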